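/- arXiv:0805.0410 — 2 statements merged into one kernel-verified Lean document; each statement's English description precedes it below -/
import Mathlib

section
/- Let q be a prime power and α : 𝔽_q → 𝔽_q a permutation. Let K_α = ⋃_{i ∈ 𝔽_q} L(i, (0, α(i))) together with one vertical line, and for x ∈ K_α let μ_x be the number of lines L(i,(0,α(i))), i ∈ 𝔽_q, through x. Let Γ_α be the set of maximal collinear subsets of G_α = {(i,α(i)) : i ∈ 𝔽_q} of size at least 2. Then Σ_{x ∈ K_α} C(μ_x − 1, 2) = Σ_{e ∈ Γ_α} C(|e| − 1, 2). -/
open Finset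

/-- The line in `F × F` through `p` with (finite) slope `s`. -/
def lineF {F : Type*} [Field F] [Fintype F] [DecidableEq F] (s : F) (p : F × F) :
    Finset (F × F) :=
  Finset.univ.filter fun x => x.2 = p.2 + s * (x.1 - p.1)

/-- The vertical line in `F × F` with first coordinate `c`. -/
def vertF {F : Type*} [Field F] [Fintype F] [DecidableEq F] (c : F) : Finset (F × F) :=
  Finset.univ.filter fun x => x.1 = c

/-- The line through `p` with slope `s ∈ PG(1,q) = F ∪ {∞}` (`none` = vertical). -/
def lineO {F : Type*} [Field F] [Fintype F] [DecidableEq F] (s : Option F) (p : F × F) :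
    Finset (F × F) :=
  match s with
  | some a => lineF a p
  | none => vertF p.1

section Aux

variable {F : Type*} [Field F]

lemma collinear_of_line {s : Set (F × F)} {m k : F}
    (h : ∀ p ∈ s, p.2 = m * p.1 + k) : Collinear F s := by
  rw [collinear_iff_exists_forall_eq_smul_vadd]
  refine ⟨(0, k), (1, m), fun p hp => ⟨p.1, ?_⟩⟩
  have hp2 := h p hp
  apply Prod.ext <;> simp [hp2, mul_comm]

lemma line_of_collinear {s : Set (F × F)} (hs : Collinear F s)
    {a b : F × F} (ha : a ∈ s) (hb : b ∈ s) (hab : a ≠ b) {m k : F}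
    (ha' : a.2 = m * a.1 + k) (hb' : b.2 = m * b.1 + k) :
    ∀ c ∈ s, c.2 = m * c.1 + k := by
  rw [collinear_iff_exists_forall_eq_smul_vadd] at hs
  obtain ⟨p₀, v, hv⟩ := hs
  obtain ⟨ra, hra⟩ := hv a ha
  obtain ⟨rb, hrb⟩ := hv b hb
  have hrab : ra ≠ rb := by rintro rfl; exact hab (hra.trans hrb.symm)
  have hD : ra - rb ≠ 0 := sub_ne_zero.mpr hrab
  have a1 : a.1 = ra * v.1 + p₀.1 := by rw [hra]; rfl
  have a2 : a.2 = ra * v.2 + p₀.2 := by rw [hra]; rfl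
  have b1 : b.1 = rb * v.1 + p₀.1 := by rw [hrb]; rfl
  have b2 : b.2 = rb * v.2 + p₀.2 := by rw [hrb]; rfl
  have key : v.2 = m * v.1 := by
    have h1 : (ra - rb) * v.2 = (ra - rb) * (m * v.1) := by
      have e1 := ha'; have e2 := hb'
      rw [a1, a2] at e1
      rw [b1, b2] at e2
      linear_combination e1 - e2
    exact mul_left_cancel₀ hD h1
  intro cc hc
  obtain ⟨rc, hrc⟩ := hv cc hc
  have c1 : cc.1 = rc * v.1 + p₀.1 := by rw [hrc]; rfl
  have c2 : cc.2 = rc * v.2 + p₀.2 := by rw [hrc]; rfl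
  have e1 := ha'
  rw [a1, a2] at e1
  rw [c1, c2]
  linear_combination e1 + (rc - ra) * key

end Aux

section Aux2

variable {F : Type*} [Field F] [Fintype F] [DecidableEq F]

def Nfin (α : F ≃ F) (x : F × F) : Finset F :=
  Finset.univ.filter fun i => x ∈ lineF i (0, α i)

def Efin (α : F ≃ F) (x : F × F) : Finset (F × F) :=
  (Nfin α x).image fun i => (i, α i)

lemma graph_inj (α : F ≃ F) : Function.Injective fun i : F => (i, α i) :=
  fun _ _ h => (Prod.ext_iff.mp h).1

lemma mem_Nfin {α : F ≃ F} {x : F × F} {i : F} :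
    i ∈ Nfin α x ↔ α i = (-x.1) * i + x.2 := by
  simp only [Nfin, lineF, Finset.mem_filter, Finset.mem_univ, true_and]
  constructor <;> intro h <;> linear_combination -h

lemma mem_Efin {α : F ≃ F} {x : F × F} {p : F × F} :
    p ∈ Efin α x ↔ ∃ i ∈ Nfin α x, (i, α i) = p := by
  simp [Efin, Finset.mem_image]

lemma Efin_subset_graph (α : F ≃ F) (x : F × F) :
    Efin α x ⊆ Finset.univ.image fun i => (i, α i) :=
  Finset.image_subset_image (Finset.filter_subset _ _)

lemma card_Efin (α : F ≃ F) (x : F × F) : (Efin α x).card = (Nfin α x).card :=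
  Finset.card_image_of_injective _ (graph_inj α)

lemma Efin_line {α : F ≃ F} {x : F × F} :
    ∀ p ∈ (Efin α x : Set (F × F)), p.2 = (-x.1) * p.1 + x.2 := by
  intro p hp
  obtain ⟨i, hi, rfl⟩ := mem_Efin.mp hp
  exact mem_Nfin.mp hi

lemma collinear_Efin (α : F ≃ F) (x : F × F) : Collinear F (Efin α x : Set (F × F)) :=
  collinear_of_line Efin_line

lemma Efin_maximal {α : F ≃ F} {x : F × F} (h3 : 2 ≤ (Nfin α x).card)
    (e' : Finset (F × F)) (hsub : Efin α x ⊆ e')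
    (hG : e' ⊆ Finset.univ.image fun i => (i, α i))
    (hcol : Collinear F (e' : Set (F × F))) : e' = Efin α x := by
  obtain ⟨i₁, h₁, i₂, h₂, hne⟩ := Finset.one_lt_card.mp (by omega : 1 < (Nfin α x).card)
  have ha : (i₁, α i₁) ∈ Efin α x := mem_Efin.mpr ⟨i₁, h₁, rfl⟩
  have hb : (i₂, α i₂) ∈ Efin α x := mem_Efin.mpr ⟨i₂, h₂, rfl⟩
  have habne : ((i₁, α i₁) : F × F) ≠ (i₂, α i₂) := fun h => hne (Prod.ext_iff.mp h).1
  have hline := line_of_collinear hcol (Finset.mem_coe.mpr (hsub ha))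
    (Finset.mem_coe.mpr (hsub hb)) habne (mem_Nfin.mp h₁) (mem_Nfin.mp h₂)
  refine Finset.Subset.antisymm (fun p hp => ?_) hsub
  obtain ⟨j, _, rfl⟩ := Finset.mem_image.mp (hG hp)
  exact mem_Efin.mpr ⟨j, mem_Nfin.mpr (hline _ (Finset.mem_coe.mpr hp)), rfl⟩

end Aux2

/- STATEMENT 6 (Cooper's correspondence): with K_α the union of the lines
L(i,(0,α(i))) together with one vertical line, μ_x the number of lines L(i,(0,α(i)))
through x, and Γ_α the maximal collinear subsets of the graph of α of size ≥ 2,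
Σ_{x ∈ K_α} C(μ_x-1, 2) = Σ_{e ∈ Γ_α} C(|e|-1, 2). -/
open Classical in
theorem cooper_correspondence {F : Type*} [Field F] [Fintype F] [DecidableEq F]
    (α : F ≃ F) (c : F) :
    ∑ x ∈ ((Finset.univ : Finset F).biUnion fun i => lineF i (0, α i)) ∪ vertF c,
        Nat.choose (((Finset.univ : Finset F).filter fun i => x ∈ lineF i (0, α i)).card - 1) 2
      = ∑ e ∈ (Finset.univ : Finset (Finset (F × F))).filter (fun e =>
            e ⊆ Finset.univ.image (fun i => (i, α i)) ∧ 2 ≤ e.card ∧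
            Collinear F (e : Set (F × F)) ∧
            ∀ e' : Finset (F × F), e ⊆ e' →
              e' ⊆ Finset.univ.image (fun i => (i, α i)) →
              Collinear F (e' : Set (F × F)) → e' = e),
          Nat.choose (e.card - 1) 2 := by
  classical
  have hNdef : ∀ x : F × F,
      ((Finset.univ : Finset F).filter fun i => x ∈ lineF i (0, α i)) = Nfin α x :=
    fun _ => rfl
  simp only [hNdef]
  set T : Finset (Finset (F × F)) := (Finset.univ : Finset (Finset (F × F))).filter (fun e =>
      e ⊆ Finset.univ.image (fun i => (i, α i)) ∧ 2 ≤ e.card ∧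
      Collinear F (e : Set (F × F)) ∧
      ∀ e' : Finset (F × F), e ⊆ e' →
        e' ⊆ Finset.univ.image (fun i => (i, α i)) →
        Collinear F (e' : Set (F × F)) → e' = e) with hTdef
  set S : Finset (F × F) := Finset.univ.filter fun x => 3 ≤ (Nfin α x).card with hSdef
  set T' : Finset (Finset (F × F)) := T.filter fun e => 3 ≤ e.card with hT'def
  -- LHS reduction to S
  have hL : (∑ x ∈ ((Finset.univ : Finset F).biUnion fun i => lineF i (0, α i)) ∪ vertF c,
      Nat.choose ((Nfin α x).card - 1) 2) = ∑ x ∈ S, Nat.choose ((Nfin α x).card - 1) 2 := by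
    refine (Finset.sum_subset ?_ ?_).symm
    · intro x hx
      rw [hSdef, Finset.mem_filter] at hx
      obtain ⟨i, hi⟩ : (Nfin α x).Nonempty := Finset.card_pos.mp (by omega)
      exact Finset.mem_union_left _
        (Finset.mem_biUnion.mpr ⟨i, Finset.mem_univ _, (Finset.mem_filter.mp hi).2⟩)
    · intro x _ hx
      rw [hSdef, Finset.mem_filter] at hx
      push_neg at hx
      have h2 : (Nfin α x).card - 1 < 2 := by
        have := hx (Finset.mem_univ x)
        omega
      exact Nat.choose_eq_zero_of_lt h2
  -- RHS reduction to T'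
  have hR : (∑ e ∈ T, Nat.choose (e.card - 1) 2) = ∑ e ∈ T', Nat.choose (e.card - 1) 2 := by
    refine (Finset.sum_subset (Finset.filter_subset _ _) ?_).symm
    intro e heT he
    simp only [Finset.mem_filter, not_and] at he
    have h2 : e.card - 1 < 2 := by
      have := he heT
      omega
    exact Nat.choose_eq_zero_of_lt h2
  rw [hL, hR]
  refine Finset.sum_bij (fun x _ => Efin α x) ?_ ?_ ?_ ?_
  · -- maps into T'
    intro x hx
    rw [hSdef, Finset.mem_filter] at hx
    have h3 : 3 ≤ (Nfin α x).card := hx.2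
    rw [hT'def, Finset.mem_filter, hTdef, Finset.mem_filter]
    refine ⟨⟨Finset.mem_univ _, Efin_subset_graph α x, ?_, collinear_Efin α x,
      fun e' hsub hG hcol => Efin_maximal (by omega) e' hsub hG hcol⟩, ?_⟩
    · rw [card_Efin]; omega
    · rw [card_Efin]; omega
  · -- injective
    intro x₁ hx₁ x₂ hx₂ heq
    rw [hSdef, Finset.mem_filter] at hx₁ hx₂
    have hNeq : Nfin α x₁ = Nfin α x₂ :=
      Finset.image_injective (graph_inj α) heq
    obtain ⟨i₁, h₁, i₂, h₂, hne⟩ :=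
      Finset.one_lt_card.mp (by have := hx₁.2; omega : 1 < (Nfin α x₁).card)
    have e11 := mem_Nfin.mp h₁
    have e12 := mem_Nfin.mp h₂
    have e21 := mem_Nfin.mp (hNeq ▸ h₁)
    have e22 := mem_Nfin.mp (hNeq ▸ h₂)
    have hfst : x₁.1 = x₂.1 := by
      have hD : i₁ - i₂ ≠ 0 := sub_ne_zero.mpr hne
      have : (i₁ - i₂) * x₁.1 = (i₁ - i₂) * x₂.1 := by
        linear_combination e11 - e21 + e22 - e12
      exact mul_left_cancel₀ hD this
    have hsnd : x₁.2 = x₂.2 := by linear_combination e21 - e11 + i₁ * hfst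
    exact Prod.ext hfst hsnd
  · -- surjective
    intro e he
    rw [hT'def, Finset.mem_filter, hTdef, Finset.mem_filter] at he
    obtain ⟨⟨-, hGsub, -, hcol, hmax⟩, h3⟩ := he
    obtain ⟨a, ha, b, hb, hab⟩ := Finset.one_lt_card.mp (by omega : 1 < e.card)
    obtain ⟨i₁, -, rfl⟩ := Finset.mem_image.mp (hGsub ha)
    obtain ⟨i₂, -, rfl⟩ := Finset.mem_image.mp (hGsub hb)
    have hne : i₁ ≠ i₂ := fun h => hab (by rw [h])
    have hD : i₂ - i₁ ≠ 0 := sub_ne_zero.mpr (fun h => hne h.symm)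
    set m : F := (α i₂ - α i₁) / (i₂ - i₁) with hm
    set x : F × F := (-m, α i₁ - m * i₁) with hxdef
    have pa : ((i₁, α i₁) : F × F).2 = m * ((i₁, α i₁) : F × F).1 + (α i₁ - m * i₁) := by ring
    have pb : ((i₂, α i₂) : F × F).2 = m * ((i₂, α i₂) : F × F).1 + (α i₁ - m * i₁) := by
      show (α i₂ : F) = m * i₂ + (α i₁ - m * i₁)
      rw [hm]
      field_simp
      ring
    have hline := line_of_collinear hcol (Finset.mem_coe.mpr ha) (Finset.mem_coe.mpr hb)
      hab pa pb
    have hesub : e ⊆ Efin α x := by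
      intro p hp
      obtain ⟨j, -, rfl⟩ := Finset.mem_image.mp (hGsub hp)
      refine mem_Efin.mpr ⟨j, mem_Nfin.mpr ?_, rfl⟩
      have := hline _ (Finset.mem_coe.mpr hp)
      rw [hxdef]
      simpa using this
    have hEe : Efin α x = e := hmax _ hesub (Efin_subset_graph α x) (collinear_Efin α x)
    have hxS : x ∈ S := by
      rw [hSdef, Finset.mem_filter]
      refine ⟨Finset.mem_univ _, ?_⟩
      rw [← card_Efin, hEe]; omega
    exact ⟨x, hxS, hEe⟩
  · -- values agree
    intro x _
    rw [card_Efin]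
end

section
/- Assume the Blokhuis–Mazzocca bound: every Kakeya set K ⊆ 𝔽_q² (q an odd prime power) satisfies #K ≥ q(q+1)/2 + (q−1)/2. Then for every permutation α : 𝔽_q → 𝔽_q, the number Ψ(α) of collinear triples in the graph G_α = {(i,α(i)) : i ∈ 𝔽_q} satisfies Ψ(α) ≥ (q−1)/2. -/
open Finset

private lemma choose_ineq (m : ℕ) (hm : 1 ≤ m) :
    Nat.choose m 2 + 1 ≤ m + Nat.choose m 3 := by
  rcases lt_or_ge m 5 with h | h
  · interval_cases m <;> decide
  · have h3 : Nat.choose m 3 * 3 = Nat.choose m 2 * (m - 2) := by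
      simpa using Nat.choose_succ_right_eq m 2
    have h4 : Nat.choose m 2 * 3 ≤ Nat.choose m 2 * (m - 2) :=
      Nat.mul_le_mul_left _ (by omega)
    omega

/-- Sets of size `k` on which `g` is constant, as a `Finset`. -/
private def constSets {F : Type*} [Fintype F] [DecidableEq F] (g : F → F) (k : ℕ) :
    Finset (Finset F) :=
  (Finset.univ.powersetCard k).filter fun t => ∀ i ∈ t, ∀ j ∈ t, g i = g j

private lemma constSets_card {F : Type*} [Fintype F] [DecidableEq F] (g : F → F) {k : ℕ}
    (hk : 0 < k) :
    (constSets g k).card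
      = ∑ v ∈ Finset.univ.image g, Nat.choose (Finset.univ.filter fun i => g i = v).card k := by
  have hrw : constSets g k
      = (Finset.univ.image g).biUnion
          (fun v => (Finset.univ.filter fun i => g i = v).powersetCard k) := by
    ext t
    simp only [constSets, mem_filter, mem_powersetCard, mem_biUnion, mem_image, mem_univ,
      true_and]
    constructor
    · rintro ⟨⟨hsub, hcard⟩, hconst⟩
      obtain ⟨i₀, hi₀⟩ := Finset.card_pos.mp (hcard ▸ hk)
      refine ⟨g i₀, ⟨i₀, rfl⟩, ?_, hcard⟩
      intro i hi
      simp [hconst i hi i₀ hi₀]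
    · rintro ⟨v, _, hsub, hcard⟩
      refine ⟨⟨Finset.subset_univ t, hcard⟩, ?_⟩
      intro i hi j hj
      have hi' := hsub hi
      have hj' := hsub hj
      simp only [mem_filter] at hi' hj'
      rw [hi'.2, hj'.2]
  rw [hrw, Finset.card_biUnion]
  · exact Finset.sum_congr rfl fun v _ => by rw [Finset.card_powersetCard]
  · intro v _ w _ hvw
    refine Finset.disjoint_left.mpr fun t htv htw => ?_
    simp only [mem_powersetCard] at htv htw
    obtain ⟨i₀, hi₀⟩ := Finset.card_pos.mp (htv.2 ▸ hk)
    have h1 := htv.1 hi₀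
    have h2 := htw.1 hi₀
    simp only [mem_filter] at h1 h2
    exact hvw (h1.2 ▸ h2.2 ▸ rfl)

private lemma key_ineq {F : Type*} [Fintype F] [DecidableEq F] (g : F → F) :
    (constSets g 2).card + (Finset.univ.image g).card
      ≤ Fintype.card F + (constSets g 3).card := by
  rw [constSets_card g (by norm_num), constSets_card g (by norm_num)]
  have hfib : Fintype.card F
      = ∑ v ∈ Finset.univ.image g, (Finset.univ.filter fun i => g i = v).card := by
    rw [← Finset.card_univ]
    exact Finset.card_eq_sum_card_fiberwise fun x _ => Finset.mem_image_of_mem g (mem_univ x)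
  rw [hfib, ← Finset.sum_add_distrib]
  have : (Finset.univ.image g).card = ∑ _v ∈ Finset.univ.image g, 1 := by
    simp
  rw [this, ← Finset.sum_add_distrib]
  refine Finset.sum_le_sum fun v hv => ?_
  have hpos : 1 ≤ (Finset.univ.filter fun i => g i = v).card := by
    obtain ⟨i, _, rfl⟩ := Finset.mem_image.mp hv
    refine Finset.card_pos.mpr ⟨i, ?_⟩
    simp
  exact choose_ineq _ hpos

open Classical in
theorem cooper_solymosi {F : Type*} [Field F] [Fintype F] [DecidableEq F]
    (hodd : Odd (Fintype.card F))
    (hBM : ∀ K : Finset (F × F), (∀ s : Option F, ∃ p : F × F, lineO s p ⊆ K) →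
      Fintype.card F * (Fintype.card F + 1) / 2 + (Fintype.card F - 1) / 2 ≤ K.card)
    (α : F ≃ F) :
    (Fintype.card F - 1) / 2
      ≤ ((Finset.univ : Finset (Finset (F × F))).filter fun t =>
          t ⊆ Finset.univ.image (fun i => (i, α i)) ∧ t.card = 3 ∧
          Collinear F (t : Set (F × F))).card := by
  classical
  set Ψ := ((Finset.univ : Finset (Finset (F × F))).filter fun t =>
      t ⊆ Finset.univ.image (fun i => (i, α i)) ∧ t.card = 3 ∧
      Collinear F (t : Set (F × F))) with hΨ
  -- the family of slice functions
  set f : F → F → F := fun x i => α i + i * x with hf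
  -- the Kakeya set
  set K : Finset (F × F) :=
    Finset.univ.biUnion (fun x => (Finset.univ.image (f x)).image fun y => (x, y)) with hK
  have memK : ∀ p : F × F, p ∈ K ↔ ∃ i, p.2 = α i + i * p.1 := by
    intro p
    simp only [hK, mem_biUnion, mem_image, mem_univ, true_and]
    constructor
    · rintro ⟨x, y, ⟨i, rfl⟩, rfl⟩
      exact ⟨i, rfl⟩
    · rintro ⟨i, hi⟩
      exact ⟨p.1, p.2, ⟨i, hi.symm⟩, rfl⟩
  -- K is a Kakeya set
  have hKakeya : ∀ s : Option F, ∃ p : F × F, lineO s p ⊆ K := by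
    intro s
    match s with
    | some a =>
      refine ⟨(0, α a), fun p hp => ?_⟩
      simp only [lineO, lineF, mem_filter, mem_univ, true_and] at hp
      rw [memK]
      exact ⟨a, by rw [hp]; ring⟩
    | none =>
      refine ⟨(0, 0), fun p hp => ?_⟩
      simp only [lineO, vertF, mem_filter, mem_univ, true_and] at hp
      rw [memK]
      refine ⟨α.symm p.2, ?_⟩
      rw [hp]
      simp
  -- card of K as a sum of slice sizes
  have hKcard : K.card = ∑ x : F, (Finset.univ.image (f x)).card := by
    rw [hK, Finset.card_biUnion]
    · refine Finset.sum_congr rfl fun x _ => ?_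
      exact Finset.card_image_of_injective _ (fun y y' h => (Prod.mk.injEq _ _ _ _).mp h |>.2)
    · intro x _ x' _ hxx'
      refine Finset.disjoint_left.mpr fun p hp hp' => ?_
      simp only [mem_image] at hp hp'
      obtain ⟨y, _, rfl⟩ := hp
      obtain ⟨y', _, h⟩ := hp'
      exact hxx' ((Prod.mk.injEq _ _ _ _).mp h |>.1.symm)
  -- summing the main inequality over slices
  have h1 : (∑ x : F, (constSets (f x) 2).card) + K.card
      ≤ Fintype.card F * Fintype.card F + ∑ x : F, (constSets (f x) 3).card := by
    rw [hKcard, ← Finset.sum_add_distrib]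
    calc (∑ x : F, ((constSets (f x) 2).card + (Finset.univ.image (f x)).card))
        ≤ ∑ x : F, (Fintype.card F + (constSets (f x) 3).card) :=
          Finset.sum_le_sum fun x _ => key_ineq (f x)
      _ = Fintype.card F * Fintype.card F + ∑ x : F, (constSets (f x) 3).card := by
          rw [Finset.sum_add_distrib, Finset.sum_const, Finset.card_univ, smul_eq_mul]
  -- each pair is constant on exactly one slice
  have h2 : (∑ x : F, (constSets (f x) 2).card) = Nat.choose (Fintype.card F) 2 := by
    have hrw : (Finset.univ : Finset F).powersetCard 2
        = Finset.univ.biUnion fun x => constSets (f x) 2 := by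
      ext t
      constructor
      · intro hmem
        have hcard : t.card = 2 := (Finset.mem_powersetCard.mp hmem).2
        obtain ⟨i, j, hij, ht⟩ := Finset.card_eq_two.mp hcard
        subst ht
        have hij' : j - i ≠ 0 := sub_ne_zero.mpr (Ne.symm hij)
        have key : f ((α i - α j) / (j - i)) i = f ((α i - α j) / (j - i)) j := by
          simp only [hf]
          field_simp
          ring
        refine Finset.mem_biUnion.mpr ⟨(α i - α j) / (j - i), mem_univ _, ?_⟩
        simp only [constSets, mem_filter, mem_powersetCard]
        refine ⟨⟨Finset.subset_univ _, hcard⟩, ?_⟩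
        intro a ha b hb
        simp only [mem_insert, mem_singleton] at ha hb
        rcases ha with rfl | rfl <;> rcases hb with rfl | rfl
        · rfl
        · exact key
        · exact key.symm
        · rfl
      · intro hmem
        obtain ⟨x, -, hx⟩ := Finset.mem_biUnion.mp hmem
        simp only [constSets, mem_filter] at hx
        exact hx.1
    rw [← Finset.card_univ, ← Finset.card_powersetCard, hrw, Finset.card_biUnion]
    intro x _ x' _ hxx'
    refine Finset.disjoint_left.mpr fun t ht ht' => ?_
    simp only [constSets, mem_filter, mem_powersetCard] at ht ht'
    obtain ⟨i, j, hij, hteq⟩ := Finset.card_eq_two.mp ht.1.2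
    subst hteq
    have e1 : f x i = f x j := ht.2 i (by simp) j (by simp)
    have e2 : f x' i = f x' j := ht'.2 i (by simp) j (by simp)
    simp only [hf] at e1 e2
    have : (i - j) * (x - x') = 0 := by linear_combination e1 - e2
    rcases mul_eq_zero.mp this with h | h
    · exact hij (sub_eq_zero.mp h)
    · exact hxx' (sub_eq_zero.mp h)
  -- triples constant on some slice inject into collinear triples of the graph
  have h3 : (∑ x : F, (constSets (f x) 3).card) ≤ Ψ.card := by
    set Φ : Finset F → Finset (F × F) := fun t => t.image fun i => (i, α i) with hΦ
    have hgraphinj : Function.Injective (fun i : F => (i, α i)) := fun i j h =>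
      (Prod.mk.injEq _ _ _ _).mp h |>.1
    have hΦinj : Function.Injective Φ := by
      intro t t' h
      have := congrArg (Finset.image Prod.fst) h
      simpa [hΦ, Finset.image_image, Function.comp_def] using this
    have hdisj : ∀ x ∈ (Finset.univ : Finset F), ∀ x' ∈ (Finset.univ : Finset F), x ≠ x' →
        Disjoint ((constSets (f x) 3).image Φ) ((constSets (f x') 3).image Φ) := by
      intro x _ x' _ hxx'
      refine Finset.disjoint_left.mpr fun s hs hs' => ?_
      simp only [mem_image] at hs hs'
      obtain ⟨t, ht, rfl⟩ := hs
      obtain ⟨t', ht', heq⟩ := hs'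
      rw [hΦinj heq] at ht'
      simp only [constSets, mem_filter, mem_powersetCard] at ht ht'
      have h13 : 1 < t.card := by
        have := ht.1.2
        omega
      obtain ⟨i, hi, j, hj, hij⟩ := Finset.one_lt_card.mp h13
      have e1 : f x i = f x j := ht.2 i hi j hj
      have e2 : f x' i = f x' j := ht'.2 i hi j hj
      simp only [hf] at e1 e2
      have : (i - j) * (x - x') = 0 := by linear_combination e1 - e2
      rcases mul_eq_zero.mp this with h | h
      · exact hij (sub_eq_zero.mp h)
      · exact hxx' (sub_eq_zero.mp h)
    have hsub : (Finset.univ.biUnion fun x => (constSets (f x) 3).image Φ) ⊆ Ψ := by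
      intro s hs
      simp only [mem_biUnion, mem_image, mem_univ, true_and] at hs
      obtain ⟨x, t, ht, rfl⟩ := hs
      simp only [constSets, mem_filter, mem_powersetCard] at ht
      rw [hΨ, mem_filter]
      refine ⟨mem_univ _, Finset.image_subset_image (Finset.subset_univ t), ?_, ?_⟩
      · rw [hΦ]
        rw [Finset.card_image_of_injective _ hgraphinj, ht.1.2]
      · -- collinearity
        have h03 : 0 < t.card := by
          have := ht.1.2
          omega
        obtain ⟨i₀, hi₀⟩ := Finset.card_pos.mp h03
        rw [collinear_iff_exists_forall_eq_smul_vadd]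
        refine ⟨(0, f x i₀), (1, -x), ?_⟩
        intro p hp
        simp only [hΦ, Finset.coe_image, Set.mem_image, Finset.mem_coe] at hp
        obtain ⟨i, hi, rfl⟩ := hp
        refine ⟨i, ?_⟩
        have hc : f x i = f x i₀ := ht.2 i hi i₀ hi₀
        simp only [hf] at hc
        have : α i = i * (-x) + (α i₀ + i₀ * x) := by linear_combination hc
        simp only [Prod.smul_mk, smul_eq_mul, vadd_eq_add, Prod.mk_add_mk, hf]
        rw [Prod.ext_iff]
        constructor
        · simp
        · simpa using this
    calc (∑ x : F, (constSets (f x) 3).card)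
        = ∑ x : F, ((constSets (f x) 3).image Φ).card := by
          refine Finset.sum_congr rfl fun x _ => ?_
          rw [Finset.card_image_of_injective _ hΦinj]
      _ = (Finset.univ.biUnion fun x => (constSets (f x) 3).image Φ).card :=
          (Finset.card_biUnion hdisj).symm
      _ ≤ Ψ.card := Finset.card_le_card hsub
  -- final arithmetic
  have hBMK := hBM K hKakeya
  obtain ⟨r, hr⟩ := hodd
  rw [hr] at h1 h2 hBMK ⊢
  have hA : Nat.choose (2 * r + 1) 2 = r * (2 * r + 1) := by
    rw [Nat.choose_two_right]
    have e : (2 * r + 1) * (2 * r + 1 - 1) = r * (2 * r + 1) * 2 := by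
      have : 2 * r + 1 - 1 = 2 * r := rfl
      rw [this]; ring
    rw [e, Nat.mul_div_cancel _ (by norm_num)]
  have hB : (2 * r + 1) * (2 * r + 1 + 1) / 2 = (r + 1) * (2 * r + 1) := by
    have e : (2 * r + 1) * (2 * r + 1 + 1) = (r + 1) * (2 * r + 1) * 2 := by ring
    rw [e, Nat.mul_div_cancel _ (by norm_num)]
  have hC : (2 * r + 1 - 1) / 2 = r := by omega
  rw [hA] at h2
  rw [hB, hC] at hBMK
  rw [hC]
  rw [h2] at h1
  have key : (2 * r + 1) * (2 * r + 1) = r * (2 * r + 1) + (r + 1) * (2 * r + 1) := by ring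
  linarith [h1, h3, hBMK, key]
end
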